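/- For all integers κ ≥ 0, d ≥ 0 and s ≥ 0, there exists k ≥ 0 with the following property. Let G be a connected graph with clique number at most κ. Let x_1, ..., x_k ∈ V(G) be distinct vertices, and let v ∈ V(G) be such that the distance between v and x_i is at most d for 1 ≤ i ≤ k. Then there exist a vertex u ∈ V(G), a subset S ⊆ {1, ..., k} with |S| = s, and for each i ∈ S a shortest path Q_i in G between u and x_i of length at most d, such that all Q_i (i ∈ S) have the same length, any two of them are disjoint except for u, and for all distinct i, j ∈ S there is no edge of G between V(Q_i) \ {u} and V(Q_j) \ {u}. -/

import Mathlib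

open SimpleGraph Finset

variable {V : Type} {G : SimpleGraph V}

/-- Walk along a chain of vertices. -/
def chainWalk (G : SimpleGraph V) (p : ℕ → V) (a : ℕ) :
    (n : ℕ) → (∀ t, t < n → G.Adj (p (a + t)) (p (a + t + 1))) → G.Walk (p a) (p (a + n))
  | 0, _ => SimpleGraph.Walk.nil
  | n + 1, h => (chainWalk G p a n (fun t ht => h t (Nat.lt_succ_of_lt ht))).concat
      (h n (Nat.lt_succ_self n))

lemma chainWalk_length (p : ℕ → V) (a n : ℕ) (h) :
    (chainWalk G p a n h).length = n := by
  induction n with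
  | zero => rfl
  | succ n ih => simp [chainWalk, SimpleGraph.Walk.length_concat, ih]

lemma chainWalk_getVert (p : ℕ → V) (a n : ℕ) (h) (t : ℕ) (ht : t ≤ n) :
    (chainWalk G p a n h).getVert t = p (a + t) := by
  induction n with
  | zero => interval_cases t; simp [chainWalk]
  | succ n ih =>
    simp only [chainWalk, SimpleGraph.Walk.concat_eq_append,
      SimpleGraph.Walk.getVert_append, chainWalk_length]
    rcases lt_or_ge t n with h1 | h1
    · rw [if_pos h1]; exact ih _ h1.le
    · rw [if_neg (by omega)]
      rcases (by omega : t = n ∨ t = n + 1) with rfl | rfl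
      · simp [show t - t = 0 from by omega, SimpleGraph.Walk.getVert]
      · have : n + 1 - n = 1 := by omega
        rw [this]
        simp [SimpleGraph.Walk.getVert]

lemma chainWalk_mem_support (p : ℕ → V) (a n : ℕ) (h) (z : V) :
    z ∈ (chainWalk G p a n h).support ↔ ∃ t ≤ n, z = p (a + t) := by
  rw [SimpleGraph.Walk.mem_support_iff_exists_getVert]
  constructor
  · rintro ⟨t, h1, h2⟩
    rw [chainWalk_length] at h2
    exact ⟨t, h2, (chainWalk_getVert p a n h t h2 ▸ h1).symm⟩
  · rintro ⟨t, h1, rfl⟩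
    exact ⟨t, by rw [chainWalk_getVert p a n h t h1], by rw [chainWalk_length]; exact h1⟩

open Finset

/-- Sequence form of Ramsey: a long "focal" sequence. -/
lemma ramsey_aux (c : ℕ) (hc : 0 < c) : ∀ m : ℕ, ∃ N : ℕ, ∀ {V : Type} (f : V → V → Fin c)
    (T : Finset V), N ≤ T.card → ∃ (g : Fin m → V) (cc : Fin m → Fin c),
      (∀ i, g i ∈ T) ∧ Function.Injective g ∧ ∀ i j : Fin m, i < j → f (g i) (g j) = cc i := by
  intro m
  induction m with
  | zero =>
    exact ⟨0, fun f T _ => ⟨Fin.elim0, Fin.elim0, fun i => i.elim0, fun i => i.elim0,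
      fun i => i.elim0⟩⟩
  | succ m ih =>
    obtain ⟨N, hN⟩ := ih
    refine ⟨c * N + 1, fun f T hT => ?_⟩
    classical
    have hTne : T.Nonempty := Finset.card_pos.mp (by omega)
    obtain ⟨a, ha⟩ := hTne
    set T' := T.erase a with hT'
    have hT'card : c * N ≤ T'.card := by
      rw [hT', Finset.card_erase_of_mem ha]; omega
    -- pigeonhole: some color class of f a has ≥ N elements
    have hmaps : ∀ b ∈ T', f a b ∈ (Finset.univ : Finset (Fin c)) := fun _ _ => mem_univ _
    have hcard : (Finset.univ : Finset (Fin c)).card * N ≤ T'.card := by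
      simpa [Finset.card_univ] using hT'card
    obtain ⟨col, _, hcol⟩ := Finset.exists_le_card_fiber_of_mul_le_card_of_maps_to hmaps
      (by simp [Finset.card_univ, Fin.pos_iff_nonempty.mp hc]) hcard
    set F := T'.filter (fun b => f a b = col) with hF
    obtain ⟨g', cc', hg'T, hg'inj, hg'col⟩ := hN f F hcol
    refine ⟨Fin.cons a g', Fin.cons col cc', ?_, ?_, ?_⟩
    · intro i
      refine Fin.cases ?_ ?_ i
      · simpa using ha
      · intro j; simp only [Fin.cons_succ]
        exact Finset.mem_of_mem_erase (Finset.mem_of_mem_filter _ (hg'T j))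
    · intro i j hij
      rcases Fin.eq_zero_or_eq_succ i with rfl | ⟨i', rfl⟩ <;>
        rcases Fin.eq_zero_or_eq_succ j with rfl | ⟨j', rfl⟩
      · rfl
      · exfalso
        simp only [Fin.cons_zero, Fin.cons_succ] at hij
        have := hg'T j'
        rw [← hij] at this
        exact Finset.notMem_erase a T (Finset.mem_of_mem_filter _ this)
      · exfalso
        simp only [Fin.cons_zero, Fin.cons_succ] at hij
        have := hg'T i'
        rw [hij] at this
        exact Finset.notMem_erase a T (Finset.mem_of_mem_filter _ this)
      · simp only [Fin.cons_succ] at hij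
        rw [hg'inj hij]
    · intro i j hij
      rcases Fin.eq_zero_or_eq_succ i with rfl | ⟨i', rfl⟩ <;>
        rcases Fin.eq_zero_or_eq_succ j with rfl | ⟨j', rfl⟩
      · exact absurd hij (lt_irrefl _)
      · simp only [Fin.cons_zero, Fin.cons_succ]
        have := hg'T j'
        rw [hF, Finset.mem_filter] at this
        exact this.2
      · exact absurd hij (by simp [Fin.lt_def])
      · simp only [Fin.cons_succ]
        exact hg'col i' j' (by simpa [Fin.succ_lt_succ_iff] using hij)

/-- Multicolour Ramsey for symmetric colourings of pairs from a finset. -/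
lemma ramsey_pairs (c n : ℕ) (hc : 0 < c) : ∃ N : ℕ, ∀ {V : Type} (f : V → V → Fin c),
    (∀ a b, f a b = f b a) → ∀ (T : Finset V), N ≤ T.card →
    ∃ (S : Finset V) (col : Fin c), S ⊆ T ∧ S.card = n ∧
      ∀ a ∈ S, ∀ b ∈ S, a ≠ b → f a b = col := by
  classical
  obtain ⟨N, hN⟩ := ramsey_aux c hc (c * n)
  refine ⟨N, fun f hsymm T hT => ?_⟩
  obtain ⟨g, cc, hgT, hginj, hgcol⟩ := hN f T hT
  -- pigeonhole on cc
  have hmaps : ∀ i ∈ (Finset.univ : Finset (Fin (c * n))), cc i ∈ (Finset.univ : Finset (Fin c)) :=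
    fun _ _ => mem_univ _
  obtain ⟨col, _, hcol⟩ := Finset.exists_le_card_fiber_of_mul_le_card_of_maps_to (n := n) hmaps
    (by simp [Finset.card_univ, Fin.pos_iff_nonempty.mp hc])
    (by simp [Finset.card_univ])
  obtain ⟨I, hIsub, hIcard⟩ := Finset.exists_subset_card_eq hcol
  refine ⟨I.image g, col, ?_, ?_, ?_⟩
  · intro z hz
    obtain ⟨i, _, rfl⟩ := Finset.mem_image.mp hz
    exact hgT i
  · rw [Finset.card_image_of_injective _ hginj, hIcard]
  · intro z hz w hw hzw
    obtain ⟨i, hi, rfl⟩ := Finset.mem_image.mp hz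
    obtain ⟨j, hj, rfl⟩ := Finset.mem_image.mp hw
    have hij : i ≠ j := fun h => hzw (by rw [h])
    have hcci : cc i = col := (Finset.mem_filter.mp (hIsub hi)).2
    have hccj : cc j = col := (Finset.mem_filter.mp (hIsub hj)).2
    rcases lt_or_gt_of_ne hij with h | h
    · rw [hgcol i j h, hcci]
    · rw [hsymm, hgcol j i h, hccj]

section Levels

variable {u v y : V}

/-- Vertices along a shortest walk are at the right distance. -/
lemma getVert_dist (hconn : G.Connected) (P : G.Walk v y) (hP : P.length = G.dist v y)
    (t : ℕ) (ht : t ≤ P.length) : G.dist v (P.getVert t) = t := by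
  have h1 : G.dist v (P.getVert t) ≤ t := by
    have hadj : ∀ r, r < t → G.Adj (P.getVert (0 + r)) (P.getVert (0 + r + 1)) := fun r hr => by
      simpa using P.adj_getVert_succ (by omega)
    have := SimpleGraph.dist_le ((chainWalk G P.getVert 0 t hadj).copy P.getVert_zero
      (by rw [Nat.zero_add]))
    rwa [SimpleGraph.Walk.length_copy, chainWalk_length] at this
  have h2 : G.dist (P.getVert t) y ≤ P.length - t := by
    have hadj : ∀ r, r < P.length - t → G.Adj (P.getVert (t + r)) (P.getVert (t + r + 1)) :=
      fun r hr => P.adj_getVert_succ (by omega)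
    have := SimpleGraph.dist_le ((chainWalk G P.getVert t (P.length - t) hadj).copy rfl
      (by rw [show t + (P.length - t) = P.length from by omega, P.getVert_length]))
    rwa [SimpleGraph.Walk.length_copy, chainWalk_length] at this
  have h3 := hconn.dist_triangle (u := v) (v := P.getVert t) (w := y)
  omega

lemma adj_dist_le (hconn : G.Connected) {a b : V} (hab : G.Adj a b) (v : V) :
    G.dist v b ≤ G.dist v a + 1 := by
  have h1 : G.dist a b ≤ 1 := by
    simpa using SimpleGraph.dist_le hab.toWalk
  have := hconn.dist_triangle (u := v) (v := a) (w := b)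
  omega

/-- A vertex on a walk splits the distance. -/
lemma mem_support_dist_add_dist (P : G.Walk u y) {z : V} (hz : z ∈ P.support) :
    G.dist u z + G.dist z y ≤ P.length := by
  classical
  have hsplit := P.take_spec hz
  have := congrArg SimpleGraph.Walk.length hsplit
  rw [SimpleGraph.Walk.length_append] at this
  calc G.dist u z + G.dist z y ≤ (P.takeUntil z hz).length + (P.dropUntil z hz).length :=
        Nat.add_le_add (SimpleGraph.dist_le _) (SimpleGraph.dist_le _)
    _ = P.length := this

end Levels

/-- The key inductive statement: `k` vertices at distance exactly `ℓ` from `v` yield a star. -/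
def StarProp (κ ℓ s k : ℕ) : Prop :=
  ∀ {V : Type} (G : SimpleGraph V), G.Connected →
    (∀ (n : ℕ) (t : Finset V), G.IsNClique n t → n ≤ κ) →
    ∀ (x : Fin k → V), Function.Injective x →
    ∀ v : V, (∀ i, G.dist v (x i) = ℓ) →
    ∃ (u : V) (S : Finset (Fin k)), S.card = s ∧
      ∃ (L : ℕ) (Q : ∀ i : Fin k, i ∈ S → G.Walk u (x i)),
        G.dist v u + L = ℓ ∧
        (∀ i hi, (Q i hi).length = L ∧ L = G.dist u (x i)) ∧
        (∀ i hi j hj, i ≠ j →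
          (∀ z, z ∈ (Q i hi).support → z ∈ (Q j hj).support → z = u) ∧
          (∀ a ∈ (Q i hi).support, a ≠ u → ∀ b ∈ (Q j hj).support, b ≠ u → ¬ G.Adj a b))

/-- Apply a `Star` statement to a subfamily of an indexed family of vertices. -/
lemma star_subfamily {κ ℓ s k : ℕ} (h : StarProp κ ℓ s k) {V : Type} (G : SimpleGraph V)
    (hconn : G.Connected) (hclq : ∀ (n : ℕ) (t : Finset V), G.IsNClique n t → n ≤ κ)
    {ι : Type} [DecidableEq ι] (x : ι → V) (A : Finset ι) (hxA : Set.InjOn x A)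
    (hA : k ≤ A.card) (v : V) (hd : ∀ i ∈ A, G.dist v (x i) = ℓ) :
    ∃ (u : V) (S : Finset ι), S ⊆ A ∧ S.card = s ∧
      ∃ (L : ℕ) (Q : ∀ i, i ∈ S → G.Walk u (x i)),
        G.dist v u + L = ℓ ∧
        (∀ i hi, (Q i hi).length = L ∧ L = G.dist u (x i)) ∧
        (∀ i hi j hj, i ≠ j →
          (∀ z, z ∈ (Q i hi).support → z ∈ (Q j hj).support → z = u) ∧
          (∀ a ∈ (Q i hi).support, a ≠ u → ∀ b ∈ (Q j hj).support, b ≠ u → ¬ G.Adj a b)) := by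
  classical
  obtain ⟨A', hA'sub, hA'card⟩ := Finset.exists_subset_card_eq hA
  set e : Fin k → ι := fun i => (A'.equivFin.symm (Fin.cast hA'card.symm i) : ι) with he
  have heA' : ∀ i, e i ∈ A' := fun i => (A'.equivFin.symm (Fin.cast hA'card.symm i)).2
  have heinj : Function.Injective e := by
    intro i j hij
    have := A'.equivFin.symm.injective (Subtype.ext hij)
    simpa [Fin.ext_iff] using this
  have hxe_inj : Function.Injective (x ∘ e) := fun i j hij => by
    exact heinj (hxA (hA'sub (heA' i)) (hA'sub (heA' j)) hij)
  obtain ⟨u, S₀, hS₀card, L, Q₀, hvu, hlen, hpair⟩ :=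
    h G hconn hclq (x ∘ e) hxe_inj v (fun i => hd _ (hA'sub (heA' i)))
  have hpre : ∀ i ∈ S₀.image e, ∃ i₀, i₀ ∈ S₀ ∧ e i₀ = i := by
    intro i hi; simpa using Finset.mem_image.mp hi
  refine ⟨u, S₀.image e, ?_, ?_, L,
    fun i hi => (Q₀ (hpre i hi).choose (hpre i hi).choose_spec.1).copy rfl
      (congrArg x (hpre i hi).choose_spec.2), ?_, ?_, ?_⟩
  · intro i hi
    obtain ⟨i₀, _, rfl⟩ := hpre i hi
    exact hA'sub (heA' i₀)
  · rw [Finset.card_image_of_injective _ heinj, hS₀card]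
  · exact hvu
  · intro i hi
    have := hlen (hpre i hi).choose (hpre i hi).choose_spec.1
    refine ⟨by rw [SimpleGraph.Walk.length_copy]; exact this.1, ?_⟩
    calc L = G.dist u (x (e (hpre i hi).choose)) := this.2
      _ = G.dist u (x i) := by rw [(hpre i hi).choose_spec.2]
  · intro i hi j hj hij
    have hne : (hpre i hi).choose ≠ (hpre j hj).choose := by
      intro hcon
      apply hij
      rw [← (hpre i hi).choose_spec.2, ← (hpre j hj).choose_spec.2, hcon]
    have := hpair (hpre i hi).choose (hpre i hi).choose_spec.1
      (hpre j hj).choose (hpre j hj).choose_spec.1 hne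
    simpa only [SimpleGraph.Walk.support_copy] using this

lemma star_exists (κ : ℕ) : ∀ ℓ s : ℕ, ∃ k, StarProp κ ℓ s k := by
  intro ℓ
  induction ℓ using Nat.strong_induction_on with
  | _ ℓ IH =>
  intro s
  classical
  -- trivial cases s = 0, s = 1
  rcases Nat.lt_or_ge s 2 with hs | hs2
  · refine ⟨1, ?_⟩
    intro V G hconn hclq x hx v hdist
    interval_cases s
    · refine ⟨x 0, ∅, by simp, 0, fun i hi => absurd hi (Finset.notMem_empty i),
        by simpa using hdist 0, fun i hi => absurd hi (Finset.notMem_empty i),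
        fun i hi => absurd hi (Finset.notMem_empty i)⟩
    · refine ⟨x 0, {0}, by simp, 0,
        fun i hi => SimpleGraph.Walk.nil.copy rfl
          (congrArg x (Finset.mem_singleton.mp hi).symm), by simpa using hdist 0, ?_, ?_⟩
      · intro i hi
        have h0 : i = 0 := Finset.mem_singleton.mp hi
        subst h0
        simp [SimpleGraph.dist_self]
      · intro i hi j hj hij
        exact absurd ((Finset.mem_singleton.mp hi).trans
          (Finset.mem_singleton.mp hj).symm) hij
  -- case ℓ = 0, s ≥ 2 : vacuous
  rcases Nat.eq_zero_or_pos ℓ with rfl | hℓ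
  · refine ⟨2, ?_⟩
    intro V G hconn hclq x hx v hdist
    exfalso
    have h0 : x 0 = v := (hconn.dist_eq_zero_iff.mp (by rw [SimpleGraph.dist_comm]; exact hdist 0))
    have h1 : x 1 = v := (hconn.dist_eq_zero_iff.mp (by rw [SimpleGraph.dist_comm]; exact hdist 1))
    exact absurd (hx (h0.trans h1.symm)) (by decide)
  -- main case
  have hIH : ∀ μ, μ < ℓ → ∃ k, StarProp κ μ s k := fun μ hμ => IH μ hμ s
  set kk : ℕ → ℕ := fun μ => if h : μ < ℓ then (hIH μ h).choose else 0 with hkk_def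
  have hkk : ∀ μ (h : μ < ℓ), StarProp κ μ s (kk μ) := by
    intro μ h
    rw [hkk_def]
    simp only [dif_pos h]
    exact (hIH μ h).choose_spec
  set K := (Finset.range ℓ).sup kk with hK
  set t2 := κ + 2 * s + 1 with ht2
  obtain ⟨N₂, hN₂⟩ := ramsey_pairs 2 t2 (by norm_num)
  set m := N₂ + s * (K + 1) + κ + 2 with hm
  obtain ⟨N, hN⟩ := ramsey_pairs (ℓ + 1) m (by omega)
  refine ⟨N, ?_⟩
  intro V G hconn hclq x hx v hdist
  classical
  -- choose shortest walks
  have hPex : ∀ i, ∃ P : G.Walk v (x i), P.length = ℓ := by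
    intro i
    obtain ⟨P, hP⟩ := (hconn v (x i)).exists_walk_length_eq_dist
    exact ⟨P, by rw [hP, hdist i]⟩
  choose P hPlen using hPex
  set p : Fin N → ℕ → V := fun i t => (P i).getVert t with hp_def
  have hp0 : ∀ i, p i 0 = v := fun i => (P i).getVert_zero
  have hpl : ∀ i, p i ℓ = x i := fun i => by
    rw [hp_def]; simpa [hPlen i] using (P i).getVert_length
  have hlev : ∀ i t, t ≤ ℓ → G.dist v (p i t) = t := by
    intro i t ht
    exact getVert_dist hconn (P i) (by rw [hPlen i, hdist i]) t (by rw [hPlen i]; exact ht)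
  have hadjp : ∀ i t, t < ℓ → G.Adj (p i t) (p i (t + 1)) := by
    intro i t ht
    exact (P i).adj_getVert_succ (by rw [hPlen i]; exact ht)
  -- interaction levels
  set Inter : Fin N → Fin N → ℕ → Prop := fun i j t => ∃ a b, a ≤ ℓ ∧ b ≤ ℓ ∧ max a b = t ∧
    (p i a = p j b ∨ G.Adj (p i a) (p j b)) with hInter_def
  have hInter0 : ∀ i j, Inter i j 0 := fun i j =>
    ⟨0, 0, by omega, by omega, by simp, Or.inl (by rw [hp0, hp0])⟩
  have hISne : ∀ i j, ((Finset.range (ℓ + 1)).filter (Inter i j)).Nonempty := fun i j =>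
    ⟨0, Finset.mem_filter.mpr ⟨Finset.mem_range.mpr (by omega), hInter0 i j⟩⟩
  set μm : Fin N → Fin N → ℕ := fun i j =>
    (((Finset.range (ℓ + 1)).filter (Inter i j))).max' (hISne i j) with hμm_def
  have hμm_le : ∀ i j, μm i j ≤ ℓ := by
    intro i j
    have h1 := (Finset.mem_filter.mp (Finset.max'_mem _ (hISne i j))).1
    rw [Finset.mem_range] at h1
    simp only [hμm_def]
    omega
  have hμm_mem : ∀ i j, Inter i j (μm i j) := fun i j =>
    (Finset.mem_filter.mp (Finset.max'_mem _ (hISne i j))).2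
  have hμm_ub : ∀ i j t, t ≤ ℓ → Inter i j t → t ≤ μm i j := by
    intro i j t ht hint
    exact Finset.le_max' _ t (Finset.mem_filter.mpr ⟨Finset.mem_range.mpr (by omega), hint⟩)
  have hμm_symm : ∀ i j, μm i j = μm j i := by
    have hint_symm : ∀ i j t, Inter i j t → Inter j i t := by
      rintro i j t ⟨a, b, ha, hb, hmax, h⟩
      refine ⟨b, a, hb, ha, by omega, ?_⟩
      rcases h with h | h
      · exact Or.inl h.symm
      · exact Or.inr h.symm
    intro i j
    exact le_antisymm (hμm_ub j i _ (hμm_le i j) (hint_symm i j _ (hμm_mem i j)))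
      (hμm_ub i j _ (hμm_le j i) (hint_symm j i _ (hμm_mem j i)))
  -- Ramsey
  set f : Fin N → Fin N → Fin (ℓ + 1) := fun i j => ⟨μm i j, by have := hμm_le i j; omega⟩
    with hf_def
  obtain ⟨S₀, col, -, hS₀card, hS₀col⟩ := hN f (fun i j => Fin.ext (hμm_symm i j))
    (Finset.univ : Finset (Fin N)) (by simp)
  set μ : ℕ := (col : ℕ) with hμ_def
  have hμ_le : μ ≤ ℓ := by have := col.isLt; omega
  have hmono : ∀ i ∈ S₀, ∀ j ∈ S₀, i ≠ j → μm i j = μ := by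
    intro i hi j hj hij
    have := hS₀col i hi j hj hij
    rw [hf_def] at this
    exact congrArg Fin.val this
  have hforbid : ∀ i ∈ S₀, ∀ j ∈ S₀, i ≠ j → ∀ a b, a ≤ ℓ → b ≤ ℓ → μ < max a b →
      ¬(p i a = p j b ∨ G.Adj (p i a) (p j b)) := by
    intro i hi j hj hij a b ha hb hgt hint
    have := hμm_ub i j (max a b) (by omega) ⟨a, b, ha, hb, rfl, hint⟩
    rw [hmono i hi j hj hij] at this
    omega
  have hexists : ∀ i ∈ S₀, ∀ j ∈ S₀, i ≠ j → Inter i j μ := by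
    intro i hi j hj hij
    have := hμm_mem i j
    rwa [hmono i hi j hj hij] at this
  -- level facts
  have heqlev : ∀ (i j : Fin N) a b, a ≤ ℓ → b ≤ ℓ → p i a = p j b → a = b := by
    intro i j a b ha hb h
    have h1 := hlev i a ha
    have h2 := hlev j b hb
    rw [h] at h1
    omega
  have hadjlev : ∀ (i j : Fin N) a b, a ≤ ℓ → b ≤ ℓ → G.Adj (p i a) (p j b) →
      b ≤ a + 1 ∧ a ≤ b + 1 := by
    intro i j a b ha hb h
    have h1 := adj_dist_le hconn h v
    have h2 := adj_dist_le hconn h.symm v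
    rw [hlev i a ha, hlev j b hb] at h1 h2
    omega
  rcases eq_or_lt_of_le hμ_le with hμℓ | hμℓ
  · -- CASE A : μ = ℓ
    have hA3 : ∀ i ∈ S₀, ∀ j ∈ S₀, i ≠ j →
        G.Adj (x i) (x j) ∨ G.Adj (x i) (p j (ℓ - 1)) ∨ G.Adj (p i (ℓ - 1)) (x j) := by
      intro i hi j hj hij
      obtain ⟨a, b, ha, hb, hmax, h⟩ := hexists i hi j hj hij
      rw [hμℓ] at hmax
      rcases h with h | h
      · exfalso
        have hab := heqlev i j a b ha hb h
        have ha' : a = ℓ := by omega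
        have hb' : b = ℓ := by omega
        rw [ha', hb', hpl i, hpl j] at h
        exact hij (hx h)
      · have hlv := hadjlev i j a b ha hb h
        rcases (by omega : a = ℓ ∧ b = ℓ ∨ a = ℓ ∧ b = ℓ - 1 ∨ a = ℓ - 1 ∧ b = ℓ) with
          ⟨ha', hb'⟩ | ⟨ha', hb'⟩ | ⟨ha', hb'⟩
        · rw [ha', hb', hpl i, hpl j] at h
          exact Or.inl h
        · rw [ha', hb', hpl i] at h
          exact Or.inr (Or.inl h)
        · rw [ha', hb', hpl j] at h
          exact Or.inr (Or.inr h)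
    set f2 : Fin N → Fin N → Fin 2 := fun i j => if G.Adj (x i) (x j) then 0 else 1 with hf2
    have hf2symm : ∀ a b, f2 a b = f2 b a := by
      intro a b
      simp only [hf2]
      rw [SimpleGraph.adj_comm]
    obtain ⟨S₁, col2, hS₁sub, hS₁card, hS₁col⟩ := hN₂ f2 hf2symm S₀ (by rw [hS₀card]; omega)
    by_cases hc2 : (col2 : ℕ) = 0
    · -- clique, contradiction
      exfalso
      set X := S₁.image x with hX
      have hXcard : X.card = t2 := by
        rw [hX, Finset.card_image_of_injective _ hx, hS₁card]
      have hclique : G.IsNClique t2 X := by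
        constructor
        · intro a ha b hb hab
          rw [hX, Finset.coe_image] at ha hb
          obtain ⟨i, hi, rfl⟩ := ha
          obtain ⟨j, hj, rfl⟩ := hb
          have hij : i ≠ j := fun h => hab (congrArg x h)
          have := hS₁col i hi j hj hij
          simp only [hf2] at this
          by_contra hna
          rw [if_neg hna] at this
          rw [← this] at hc2
          simp at hc2
        · exact hXcard
      have := hclq t2 X hclique
      omega
    · -- independent set
      have hind : ∀ i ∈ S₁, ∀ j ∈ S₁, i ≠ j → ¬ G.Adj (x i) (x j) := by
        intro i hi j hj hij hadj
        have := hS₁col i hi j hj hij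
        simp only [hf2, if_pos hadj] at this
        rw [← this] at hc2
        simp at hc2
      obtain ⟨I', hI'sub, hI'card⟩ := Finset.exists_subset_card_eq
        (show 2 * s ≤ S₁.card by rw [hS₁card]; omega)
      set AA : Fin N → Finset (Fin N) :=
        fun i => I'.filter (fun j => j ≠ i ∧ G.Adj (x j) (p i (ℓ - 1))) with hAA
      have hbig : ∃ i ∈ I', s ≤ (AA i).card := by
        by_contra hcon
        push_neg at hcon
        set T := I'.offDiag.filter (fun q => G.Adj (x q.2) (p q.1 (ℓ - 1))) with hT
        have hsub : I'.offDiag ⊆ T ∪ T.image Prod.swap := by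
          rintro ⟨i, j⟩ hq
          rw [Finset.mem_offDiag] at hq
          obtain ⟨hi, hj, hij⟩ := hq
          rcases hA3 i (hS₁sub (hI'sub hi)) j (hS₁sub (hI'sub hj)) hij with h | h | h
          · exact absurd h (hind i (hI'sub hi) j (hI'sub hj) hij)
          · refine Finset.mem_union_right _ (Finset.mem_image.mpr ⟨(j, i), ?_, rfl⟩)
            exact Finset.mem_filter.mpr ⟨Finset.mem_offDiag.mpr ⟨hj, hi, hij.symm⟩, h⟩
          · exact Finset.mem_union_left _
              (Finset.mem_filter.mpr ⟨Finset.mem_offDiag.mpr ⟨hi, hj, hij⟩, h.symm⟩)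
        have hcard1 : I'.offDiag.card ≤ 2 * T.card := by
          calc I'.offDiag.card ≤ (T ∪ T.image Prod.swap).card := Finset.card_le_card hsub
            _ ≤ T.card + (T.image Prod.swap).card := Finset.card_union_le _ _
            _ ≤ T.card + T.card := by
                have := Finset.card_image_le (s := T) (f := Prod.swap)
                omega
            _ = 2 * T.card := by ring
        have hcard2 : T.card ≤ 2 * s * (s - 1) := by
          have hmap : ∀ q ∈ T, Prod.fst q ∈ I' := by
            intro q hq
            rw [hT, Finset.mem_filter] at hq
            exact (Finset.mem_offDiag.mp hq.1).1
          calc T.card = ∑ i ∈ I', (T.filter (fun q => q.1 = i)).card :=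
                Finset.card_eq_sum_card_fiberwise hmap
            _ ≤ ∑ _i ∈ I', (s - 1) := by
                refine Finset.sum_le_sum (fun i hi => ?_)
                refine le_trans (Finset.card_le_card_of_injOn (fun q => q.2) ?_ ?_)
                  (show (AA i).card ≤ s - 1 by have := hcon i hi; omega)
                · rintro ⟨q1, q2⟩ hq
                  rw [Finset.mem_coe, Finset.mem_filter] at hq
                  obtain ⟨hqT, hq1⟩ := hq
                  rw [hT, Finset.mem_filter, Finset.mem_offDiag] at hqT
                  cases hq1
                  exact Finset.mem_filter.mpr ⟨hqT.1.2.1, Ne.symm hqT.1.2.2, hqT.2⟩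
                · rintro ⟨a1, a2⟩ ha ⟨b1, b2⟩ hb hab
                  simp only [Finset.coe_filter, Set.mem_setOf_eq] at ha hb
                  simp only at hab
                  rw [Prod.ext_iff]
                  exact ⟨ha.2.trans hb.2.symm, hab⟩
            _ = 2 * s * (s - 1) := by
                rw [Finset.sum_const, hI'card, smul_eq_mul]
        rw [Finset.offDiag_card, hI'card] at hcard1
        have h1 : 2 * s ≤ 2 * s * (2 * s) := Nat.le_mul_of_pos_right _ (by omega)
        have h2 : 1 ≤ s := by omega
        zify [h1, h2] at hcard1 hcard2
        nlinarith [hcard1, hcard2, show (2:ℤ) ≤ (s:ℤ) by exact_mod_cast hs2]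
      obtain ⟨i0, hi0, hAcard⟩ := hbig
      obtain ⟨S, hSsub, hScard⟩ := Finset.exists_subset_card_eq hAcard
      have hSA : ∀ j ∈ S, j ≠ i0 ∧ G.Adj (x j) (p i0 (ℓ - 1)) := fun j hj =>
        (Finset.mem_filter.mp (hSsub hj)).2
      have hSI' : ∀ j ∈ S, j ∈ I' := fun j hj => (Finset.mem_filter.mp (hSsub hj)).1
      have hulev : G.dist v (p i0 (ℓ - 1)) = ℓ - 1 := hlev i0 (ℓ - 1) (by omega)
      have hune : ∀ j : Fin N, p i0 (ℓ - 1) ≠ x j := by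
        intro j h
        have h2 := hlev j ℓ le_rfl
        rw [hpl j] at h2
        rw [h] at hulev
        omega
      refine ⟨p i0 (ℓ - 1), S, hScard, 1,
        fun j hj => SimpleGraph.Walk.cons (hSA j hj).2.symm SimpleGraph.Walk.nil, by omega,
        ?_, ?_⟩
      · intro j hj
        refine ⟨by simp, ?_⟩
        have h1 : G.dist (p i0 (ℓ - 1)) (x j) ≤ 1 := by
          simpa using SimpleGraph.dist_le ((hSA j hj).2.symm.toWalk)
        have h2 : G.dist (p i0 (ℓ - 1)) (x j) ≠ 0 := by
          intro h
          exact hune j (hconn.dist_eq_zero_iff.mp h)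
        omega
      · intro i hi j hj hij
        constructor
        · intro z hzi hzj
          simp only [SimpleGraph.Walk.support_cons, SimpleGraph.Walk.support_nil,
            List.mem_cons, List.mem_singleton, List.not_mem_nil, or_false] at hzi hzj
          rcases hzi with rfl | rfl
          · rfl
          · rcases hzj with h | h
            · exact h
            · exact absurd (hx h) hij
        · intro a hai hau b hbj hbu hadj
          simp only [SimpleGraph.Walk.support_cons, SimpleGraph.Walk.support_nil,
            List.mem_cons, List.mem_singleton, List.not_mem_nil, or_false] at hai hbj
          rcases hai with rfl | rfl
          · exact hau rfl
          · rcases hbj with rfl | rfl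
            · exact hbu rfl
            · exact hind i (hI'sub (hSI' i hi)) j (hI'sub (hSI' j hj)) hij hadj
  · -- CASE B : μ < ℓ
    have hadjtail : ∀ (j : Fin N) (t : ℕ), t < ℓ - μ → G.Adj (p j (μ + t)) (p j (μ + t + 1)) :=
      fun j t ht => hadjp j (μ + t) (by omega)
    set tail : (j : Fin N) → G.Walk (p j μ) (x j) := fun j =>
      (chainWalk G (p j) μ (ℓ - μ) (hadjtail j)).copy rfl
        (by rw [show μ + (ℓ - μ) = ℓ from by omega, hpl j]) with htail
    have htail_len : ∀ j, (tail j).length = ℓ - μ := by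
      intro j
      rw [htail]
      simp only
      rw [SimpleGraph.Walk.length_copy, chainWalk_length]
    have htail_mem : ∀ j z, z ∈ (tail j).support ↔ ∃ t, t ≤ ℓ - μ ∧ z = p j (μ + t) := by
      intro j z
      rw [htail]
      simp only
      rw [SimpleGraph.Walk.support_copy, chainWalk_mem_support]
    by_cases hbigfib : ∃ i0 ∈ S₀, s ≤ (S₀.filter (fun j => p j μ = p i0 μ)).card
    · -- subcase (i) : many indices share the vertex at level μ
      obtain ⟨i0, hi0, hfib⟩ := hbigfib
      obtain ⟨S, hSsub, hScard⟩ := Finset.exists_subset_card_eq hfib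
      have hSS₀ : ∀ j ∈ S, j ∈ S₀ := fun j hj => (Finset.mem_filter.mp (hSsub hj)).1
      have hSu : ∀ j ∈ S, p j μ = p i0 μ := fun j hj => (Finset.mem_filter.mp (hSsub hj)).2
      refine ⟨p i0 μ, S, hScard, ℓ - μ, fun j hj => (tail j).copy (hSu j hj) rfl, ?_, ?_, ?_⟩
      · rw [hlev i0 μ (by omega)]
        omega
      · intro j hj
        have hlen1 : ((tail j).copy (hSu j hj) rfl).length = ℓ - μ := by
          rw [SimpleGraph.Walk.length_copy, htail_len]
        refine ⟨hlen1, ?_⟩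
        have h1 : G.dist (p i0 μ) (x j) ≤ ℓ - μ := by
          rw [← hlen1]
          exact SimpleGraph.dist_le _
        have h2 := hconn.dist_triangle (u := v) (v := p i0 μ) (w := x j)
        rw [hdist j, hlev i0 μ (by omega)] at h2
        omega
      · intro i hi j hj hij
        constructor
        · intro z hzi hzj
          rw [SimpleGraph.Walk.support_copy, htail_mem] at hzi hzj
          obtain ⟨t, ht, rfl⟩ := hzi
          obtain ⟨t', ht', heq⟩ := hzj
          have hteq : μ + t = μ + t' := heqlev i j _ _ (by omega) (by omega) heq
          by_cases ht0 : t = 0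
          · subst ht0
            exact hSu i hi
          · exfalso
            exact hforbid i (hSS₀ i hi) j (hSS₀ j hj) hij (μ + t) (μ + t') (by omega) (by omega)
              (by omega) (Or.inl heq)
        · intro a hai hau b hbj hbu hadj
          rw [SimpleGraph.Walk.support_copy, htail_mem] at hai hbj
          obtain ⟨t, ht, rfl⟩ := hai
          obtain ⟨t', ht', rfl⟩ := hbj
          have ht0 : t ≠ 0 := fun h => hau (by rw [h, Nat.add_zero]; exact hSu i hi)
          have ht0' : t' ≠ 0 := fun h => hbu (by rw [h, Nat.add_zero]; exact hSu j hj)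
          exact hforbid i (hSS₀ i hi) j (hSS₀ j hj) hij (μ + t) (μ + t') (by omega) (by omega)
            (by omega) (Or.inr hadj)
    · -- subcase (ii) : all classes small, recurse at level μ
      push_neg at hbigfib
      have hS₀ne : S₀.Nonempty := Finset.card_pos.mp (by rw [hS₀card]; omega)
      obtain ⟨j₀, hj₀⟩ := hS₀ne
      set W := S₀.image (fun j => p j μ) with hW
      have hkkK : kk μ ≤ K := Finset.le_sup (Finset.mem_range.mpr hμℓ)
      have hWbig : K + 1 ≤ W.card := by
        by_contra hcon
        push_neg at hcon
        have hsum : S₀.card = ∑ z ∈ W, (S₀.filter (fun j => p j μ = z)).card :=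
          Finset.card_eq_sum_card_fiberwise (fun j hj => Finset.mem_image_of_mem _ hj)
        have hle : ∀ z ∈ W, (S₀.filter (fun j => p j μ = z)).card ≤ s - 1 := by
          intro z hz
          obtain ⟨j, hj, rfl⟩ := Finset.mem_image.mp hz
          have := hbigfib j hj
          omega
        have hbound : S₀.card ≤ W.card * (s - 1) := by
          rw [hsum]
          calc ∑ z ∈ W, (S₀.filter (fun j => p j μ = z)).card ≤ ∑ _z ∈ W, (s - 1) :=
                Finset.sum_le_sum hle
            _ = W.card * (s - 1) := by rw [Finset.sum_const, smul_eq_mul]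
        have hc1 : W.card * (s - 1) ≤ K * (s - 1) := Nat.mul_le_mul_right _ (by omega)
        have hc2 : K * (s - 1) ≤ K * s := Nat.mul_le_mul_left _ (by omega)
        have hc3 : K * s = s * K := Nat.mul_comm _ _
        have hc4 : s * (K + 1) = s * K + s := by ring
        rw [hS₀card] at hbound
        omega
      have hFex : ∀ z ∈ W, ∃ j, j ∈ S₀ ∧ p j μ = z := by
        intro z hz
        obtain ⟨j, hj, hjz⟩ := Finset.mem_image.mp hz
        exact ⟨j, hj, hjz⟩
      set F : V → Fin N := fun z => if h : ∃ j, j ∈ S₀ ∧ p j μ = z then h.choose else j₀ with hF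
      have hFspec : ∀ z ∈ W, F z ∈ S₀ ∧ p (F z) μ = z := by
        intro z hz
        have h := hFex z hz
        simp only [hF, dif_pos h]
        exact h.choose_spec
      obtain ⟨W', hW'sub, hW'card⟩ := Finset.exists_subset_card_eq
        (show kk μ ≤ W.card by omega)
      set C := W'.image F with hC
      have hCsub : ∀ j ∈ C, j ∈ S₀ := by
        intro j hj
        obtain ⟨z, hz, rfl⟩ := Finset.mem_image.mp hj
        exact (hFspec z (hW'sub hz)).1
      have hFinj : Set.InjOn F W' := by
        intro z1 h1 z2 h2 h
        rw [← (hFspec z1 (hW'sub (Finset.mem_coe.mp h1))).2,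
          ← (hFspec z2 (hW'sub (Finset.mem_coe.mp h2))).2, h]
      have hCcard : C.card = kk μ := by
        rw [hC, Finset.card_image_of_injOn hFinj, hW'card]
      have hpinj : Set.InjOn (fun j => p j μ) C := by
        intro j1 h1 j2 h2 h
        obtain ⟨z1, hz1, rfl⟩ := Finset.mem_image.mp (Finset.mem_coe.mp h1)
        obtain ⟨z2, hz2, rfl⟩ := Finset.mem_image.mp (Finset.mem_coe.mp h2)
        simp only at h
        rw [(hFspec z1 (hW'sub hz1)).2, (hFspec z2 (hW'sub hz2)).2] at h
        rw [h]
      obtain ⟨u, S, hSC, hScard, L', R, hvuL, hlenR, hpairR⟩ :=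
        star_subfamily (hkk μ hμℓ) G hconn hclq (fun j => p j μ) C hpinj hCcard.ge v
          (fun j _ => hlev j μ (by omega))
      have hSS₀ : ∀ j ∈ S, j ∈ S₀ := fun j hj => hCsub j (hSC hj)
      have hL'pos : 1 ≤ L' := by
        by_contra hL0
        push_neg at hL0
        obtain ⟨j1, hj1, j2, hj2, hne⟩ := Finset.one_lt_card.mp
          (show 1 < S.card by rw [hScard]; omega)
        have e1 : u = p j1 μ := SimpleGraph.Walk.eq_of_length_eq_zero
          (by rw [(hlenR j1 hj1).1]; omega)
        have e2 : u = p j2 μ := SimpleGraph.Walk.eq_of_length_eq_zero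
          (by rw [(hlenR j2 hj2).1]; omega)
        exact hne (hpinj (Finset.mem_coe.mpr (hSC hj1)) (Finset.mem_coe.mpr (hSC hj2))
          (by simp only; rw [← e1, ← e2]))
      have hsuppR : ∀ j (hj : j ∈ S) z, z ∈ (R j hj).support →
          G.dist v z ≤ μ ∧ (G.dist v z = μ → z = p j μ) := by
        intro j hj z hz
        have hsplit := mem_support_dist_add_dist (R j hj) hz
        rw [(hlenR j hj).1] at hsplit
        have htr1 := hconn.dist_triangle (u := v) (v := u) (w := z)
        have htr2 := hconn.dist_triangle (u := v) (v := z) (w := p j μ)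
        have hw : G.dist v (p j μ) = μ := hlev j μ (by omega)
        refine ⟨by omega, fun h => ?_⟩
        have h0 : G.dist z (p j μ) = 0 := by omega
        exact hconn.dist_eq_zero_iff.mp h0
      have hwne : ∀ j (hj : j ∈ S), p j μ ≠ u := by
        intro j hj h
        have h2 := (hlenR j hj).2
        rw [h, SimpleGraph.dist_self] at h2
        omega
      have hwmem : ∀ j (hj : j ∈ S), p j μ ∈ (R j hj).support := fun j hj =>
        SimpleGraph.Walk.end_mem_support _
      refine ⟨u, S, hScard, L' + (ℓ - μ), fun j hj => (R j hj).append (tail j), by omega,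
        ?_, ?_⟩
      · intro j hj
        have hlen1 : ((R j hj).append (tail j)).length = L' + (ℓ - μ) := by
          rw [SimpleGraph.Walk.length_append, (hlenR j hj).1, htail_len]
        refine ⟨hlen1, ?_⟩
        have h1 : G.dist u (x j) ≤ L' + (ℓ - μ) := by
          rw [← hlen1]
          exact SimpleGraph.dist_le _
        have h2 := hconn.dist_triangle (u := v) (v := u) (w := x j)
        rw [hdist j] at h2
        omega
      · intro i hi j hj hij
        have key : ∀ (i' : Fin N) (hi' : i' ∈ S) (j' : Fin N) (hj' : j' ∈ S), i' ≠ j' →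
            ∀ a ∈ (R i' hi').support, a ≠ u → ∀ t', t' ≤ ℓ - μ →
              ¬ G.Adj a (p j' (μ + t')) := by
          intro i' hi' j' hj' hij' a ha hau t' ht' hadj
          have hda := hsuppR i' hi' a ha
          have hlevb : G.dist v (p j' (μ + t')) = μ + t' := hlev j' (μ + t') (by omega)
          have h1 := adj_dist_le hconn hadj v
          rw [hlevb] at h1
          rcases (by omega : t' = 0 ∨ (t' = 1 ∧ G.dist v a = μ)) with ht0 | ⟨ht1, hdaμ⟩
          · subst ht0
            exact (hpairR i' hi' j' hj' hij').2 a ha hau (p j' (μ + 0)) (hwmem j' hj')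
              (hwne j' hj') hadj
          · have ha' : a = p i' μ := hda.2 hdaμ
            rw [ha'] at hadj
            subst ht1
            exact hforbid i' (hSS₀ i' hi') j' (hSS₀ j' hj') hij' μ (μ + 1) (by omega) (by omega)
              (by omega) (Or.inr hadj)
        constructor
        · intro z hzi hzj
          rw [SimpleGraph.Walk.mem_support_append_iff] at hzi hzj
          rcases hzi with hzi | hzi <;> rcases hzj with hzj | hzj
          · exact (hpairR i hi j hj hij).1 z hzi hzj
          · rw [htail_mem] at hzj
            obtain ⟨t, ht, rfl⟩ := hzj
            have h1 := (hsuppR i hi _ hzi).1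
            have h2 := hlev j (μ + t) (by omega)
            have ht0 : t = 0 := by omega
            subst ht0
            have h3 := (hsuppR i hi _ hzi).2 (by omega)
            exfalso
            exact hij (hpinj (Finset.mem_coe.mpr (hSC hi)) (Finset.mem_coe.mpr (hSC hj))
              (by simp only; rw [← h3, Nat.add_zero]))
          · rw [htail_mem] at hzi
            obtain ⟨t, ht, rfl⟩ := hzi
            have h1 := (hsuppR j hj _ hzj).1
            have h2 := hlev i (μ + t) (by omega)
            have ht0 : t = 0 := by omega
            subst ht0
            have h3 := (hsuppR j hj _ hzj).2 (by omega)
            exfalso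
            exact hij (hpinj (Finset.mem_coe.mpr (hSC hi)) (Finset.mem_coe.mpr (hSC hj))
              (by simp only; rw [← h3, Nat.add_zero]))
          · rw [htail_mem] at hzi hzj
            obtain ⟨t, ht, rfl⟩ := hzi
            obtain ⟨t', ht', heq⟩ := hzj
            have hteq : μ + t = μ + t' := heqlev i j _ _ (by omega) (by omega) heq
            exfalso
            by_cases ht0 : t = 0
            · subst ht0
              exact hij (hpinj (Finset.mem_coe.mpr (hSC hi)) (Finset.mem_coe.mpr (hSC hj))
                (by simp only; rw [show μ = μ + 0 from rfl]; rw [heq]; congr 1; omega))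
            · exact hforbid i (hSS₀ i hi) j (hSS₀ j hj) hij (μ + t) (μ + t') (by omega)
                (by omega) (by omega) (Or.inl heq)
        · intro a hai hau b hbj hbu hadj
          rw [SimpleGraph.Walk.mem_support_append_iff] at hai hbj
          rcases hai with hai | hai <;> rcases hbj with hbj | hbj
          · exact (hpairR i hi j hj hij).2 a hai hau b hbj hbu hadj
          · rw [htail_mem] at hbj
            obtain ⟨t', ht', rfl⟩ := hbj
            exact key i hi j hj hij a hai hau t' ht' hadj
          · rw [htail_mem] at hai
            obtain ⟨t, ht, rfl⟩ := hai
            exact key j hj i hi hij.symm b hbj hbu t ht hadj.symm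
          · rw [htail_mem] at hai hbj
            obtain ⟨t, ht, rfl⟩ := hai
            obtain ⟨t', ht', rfl⟩ := hbj
            by_cases ht0 : t = 0
            · subst ht0
              exact key i hi j hj hij (p i (μ + 0)) (hwmem i hi) hau t' ht' hadj
            · by_cases ht0' : t' = 0
              · subst ht0'
                exact key j hj i hi hij.symm (p j (μ + 0)) (hwmem j hj) hbu t ht hadj.symm
              · exact hforbid i (hSS₀ i hi) j (hSS₀ j hj) hij (μ + t) (μ + t') (by omega)
                  (by omega) (by omega) (Or.inr hadj)


/-- Theorem 2.1, getstar: for all `κ, d, s` there exists `k` such that in any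
connected graph with clique number at most `κ`, given `k` distinct vertices all at distance
at most `d` from a vertex `v`, there are a vertex `u`, a set `S` of `s` of the given
vertices, and shortest paths `Q i` from `u` to them, all of the same length at most `d`,
pairwise disjoint except for `u` and pairwise anticomplete away from `u`. -/
theorem stmt_4 (κ d s : ℕ) :
    ∃ k : ℕ, ∀ {V : Type} (G : SimpleGraph V), G.Connected →
      (∀ (n : ℕ) (t : Finset V), G.IsNClique n t → n ≤ κ) →
      ∀ (x : Fin k → V), Function.Injective x →
      ∀ v : V, (∀ i, G.dist v (x i) ≤ d) →
      ∃ (u : V) (S : Finset (Fin k)) (_ : S.card = s)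
        (Q : ∀ i : Fin k, i ∈ S → G.Walk u (x i)),
        (∃ L : ℕ, L ≤ d ∧ ∀ (i : Fin k) (hi : i ∈ S), (Q i hi).length = L) ∧
        (∀ (i : Fin k) (hi : i ∈ S), (Q i hi).IsPath ∧
          (Q i hi).length = G.dist u (x i)) ∧
        (∀ (i : Fin k) (hi : i ∈ S) (j : Fin k) (hj : j ∈ S), i ≠ j →
          (∀ w, w ∈ (Q i hi).support → w ∈ (Q j hj).support → w = u) ∧
          (∀ a ∈ (Q i hi).support, a ≠ u → ∀ b ∈ (Q j hj).support, b ≠ u →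
            ¬ G.Adj a b)) := by
  classical
  set kP : ℕ → ℕ := fun ℓ => (star_exists κ ℓ s).choose with hkP
  have hkPspec : ∀ ℓ, StarProp κ ℓ s (kP ℓ) := fun ℓ => (star_exists κ ℓ s).choose_spec
  set K := (Finset.range (d + 1)).sup kP with hK
  refine ⟨(d + 1) * (K + 1), ?_⟩
  intro V G hconn hclq x hx v hdist
  have hmaps : ∀ i ∈ (Finset.univ : Finset (Fin ((d + 1) * (K + 1)))),
      G.dist v (x i) ∈ Finset.range (d + 1) := fun i _ =>
    Finset.mem_range.mpr (by have := hdist i; omega)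
  obtain ⟨ℓ, hℓmem, hfib⟩ := Finset.exists_le_card_fiber_of_mul_le_card_of_maps_to
    (n := K + 1) hmaps (by simp) (by simp [Finset.card_univ])
  have hℓd : ℓ ≤ d := by have := Finset.mem_range.mp hℓmem; omega
  have hkPK : kP ℓ ≤ K := Finset.le_sup (Finset.mem_range.mpr (by omega))
  obtain ⟨u, S, hSsub, hScard, L, Q, hvuL, hlen, hpair⟩ :=
    star_subfamily (hkPspec ℓ) G hconn hclq x
      (Finset.univ.filter (fun i => G.dist v (x i) = ℓ))
      (hx.injOn) (by omega) v (fun i hi => (Finset.mem_filter.mp hi).2)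
  refine ⟨u, S, hScard, Q, ⟨L, by omega, fun i hi => (hlen i hi).1⟩, ?_, hpair⟩
  intro i hi
  have h1 := (hlen i hi).1
  have h2 := (hlen i hi).2
  exact ⟨SimpleGraph.Walk.isPath_of_length_eq_dist _ (by rw [h1, h2]), h1.trans h2⟩
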